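/- The Rado graph is indivisible: for every partition of the vertex set of the Rado graph into finitely many pieces, one of the pieces induces a subgraph isomorphic to the Rado graph. -/

import Mathlib

/-- The extension property characterizing the Rado graph: for any disjoint
finite sets `A`, `B` of vertices there is a vertex outside `A ∪ B` adjacent to
every vertex of `A` and to no vertex of `B`. -/
def ExtensionProperty {V : Type*} (G : SimpleGraph V) : Prop :=
  ∀ A B : Finset V, Disjoint A B →
    ∃ v : V, v ∉ A ∧ v ∉ B ∧ (∀ a ∈ A, G.Adj v a) ∧ (∀ b ∈ B, ¬ G.Adj v b)

namespace RadoAux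

open Classical

variable {α β : Type*} (G : SimpleGraph α) (H : SimpleGraph β)

def IsPartial (L : List (α × β)) : Prop :=
  ∀ p ∈ L, ∀ q ∈ L, (p.1 = q.1 ↔ p.2 = q.2) ∧ (G.Adj p.1 q.1 ↔ H.Adj p.2 q.2)

theorem isPartial_swap {L : List (α × β)} (h : IsPartial G H L) :
    IsPartial H G (L.map Prod.swap) := by
  intro p hp q hq
  simp only [List.mem_map] at hp hq
  obtain ⟨p', hp', rfl⟩ := hp
  obtain ⟨q', hq', rfl⟩ := hq
  obtain ⟨h1, h2⟩ := h p' hp' q' hq'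
  exact ⟨h1.symm, h2.symm⟩

theorem stepL (hH : ExtensionProperty H) (L : List (α × β)) (hL : IsPartial G H L) (a : α) :
    ∃ b : β, IsPartial G H ((a, b) :: L) := by
  by_cases ha : ∃ p ∈ L, p.1 = a
  · obtain ⟨p, hp, rfl⟩ := ha
    refine ⟨p.2, fun q hq r hr => hL q ?_ r ?_⟩
    · rcases List.mem_cons.1 hq with rfl | h
      · simpa using hp
      · exact h
    · rcases List.mem_cons.1 hr with rfl | h
      · simpa using hp
      · exact h
  · push_neg at ha
    set A : Finset β := (L.toFinset.filter (fun p => G.Adj a p.1)).image Prod.snd with hA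
    set B : Finset β := (L.toFinset.filter (fun p => ¬ G.Adj a p.1)).image Prod.snd with hB
    have hdisj : Disjoint A B := by
      rw [Finset.disjoint_left]
      rintro b hbA hbB
      simp only [hA, hB, Finset.mem_image, Finset.mem_filter, List.mem_toFinset] at hbA hbB
      obtain ⟨p, ⟨hpL, hpadj⟩, hpb⟩ := hbA
      obtain ⟨q, ⟨hqL, hqadj⟩, hqb⟩ := hbB
      have := (hL p hpL q hqL).1.2 (hpb.trans hqb.symm)
      exact hqadj (this ▸ hpadj)
    obtain ⟨b, hbA, hbB, hadj, hnadj⟩ := hH A B hdisj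
    have key : ∀ p ∈ L, b ≠ p.2 ∧ (G.Adj a p.1 ↔ H.Adj b p.2) := by
      intro p hp
      by_cases hap : G.Adj a p.1
      · have hmem : p.2 ∈ A := by
          simp only [hA, Finset.mem_image, Finset.mem_filter, List.mem_toFinset]
          exact ⟨p, ⟨hp, hap⟩, rfl⟩
        exact ⟨fun h => hbA (h ▸ hmem), iff_of_true hap (hadj _ hmem)⟩
      · have hmem : p.2 ∈ B := by
          simp only [hB, Finset.mem_image, Finset.mem_filter, List.mem_toFinset]
          exact ⟨p, ⟨hp, hap⟩, rfl⟩
        exact ⟨fun h => hbB (h ▸ hmem), iff_of_false hap (hnadj _ hmem)⟩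
    refine ⟨b, ?_⟩
    intro q hq r hr
    rcases List.mem_cons.1 hq with rfl | hq' <;> rcases List.mem_cons.1 hr with rfl | hr'
    · exact ⟨by simp, iff_of_false (G.irrefl) (H.irrefl)⟩
    · exact ⟨iff_of_false (fun h => ha r hr' h.symm) (fun h => (key r hr').1 h),
        (key r hr').2⟩
    · refine ⟨iff_of_false (fun h => ha q hq' h) (fun h => (key q hq').1 h.symm), ?_⟩
      rw [G.adj_comm, H.adj_comm]
      exact (key q hq').2
    · exact hL q hq' r hr'

theorem stepR (hG : ExtensionProperty G) (L : List (α × β)) (hL : IsPartial G H L) (b : β) :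
    ∃ a : α, IsPartial G H ((a, b) :: L) := by
  obtain ⟨a, ha⟩ := stepL H G hG (L.map Prod.swap) (isPartial_swap G H hL) b
  refine ⟨a, ?_⟩
  have := isPartial_swap H G ha
  simp only [List.map_cons, List.map_map, Prod.swap_swap_eq, List.map_id] at this
  exact this

variable [Denumerable α] [Denumerable β]

noncomputable def stage (hG : ExtensionProperty G) (hH : ExtensionProperty H) :
    ℕ → {L : List (α × β) // IsPartial G H L}
  | 0 => ⟨[], by intro p hp; simp at hp⟩
  | n + 1 =>
    let L := stage hG hH n
    let a := Denumerable.ofNat α n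
    let hb := stepL G H hH L.1 L.2 a
    let L1 : {L : List (α × β) // IsPartial G H L} := ⟨(a, hb.choose) :: L.1, hb.choose_spec⟩
    let hc := stepR G H hG L1.1 L1.2 (Denumerable.ofNat β n)
    ⟨(hc.choose, Denumerable.ofNat β n) :: L1.1, hc.choose_spec⟩

variable {G H} in
theorem stage_succ (hG : ExtensionProperty G) (hH : ExtensionProperty H) (n : ℕ) : ∃ x y, (stage G H hG hH (n + 1)).1 =
    x :: y :: (stage G H hG hH n).1 := ⟨_, _, rfl⟩

theorem stage_mono (hG : ExtensionProperty G) (hH : ExtensionProperty H) {m n : ℕ} (h : m ≤ n) {p : α × β} (hp : p ∈ (stage G H hG hH m).1) :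
    p ∈ (stage G H hG hH n).1 := by
  induction n with
  | zero => exact (Nat.le_zero.1 h) ▸ hp
  | succ n ih =>
    rcases Nat.lt_or_ge m (n+1) with h' | h'
    · obtain ⟨x, y, hxy⟩ := stage_succ hG hH n
      rw [hxy]
      exact List.mem_cons_of_mem _ (List.mem_cons_of_mem _ (ih (Nat.lt_succ_iff.1 h')))
    · exact (Nat.le_antisymm h h') ▸ hp

theorem compat (hG : ExtensionProperty G) (hH : ExtensionProperty H) {a a' : α} {b b' : β} {m n : ℕ} (hm : (a, b) ∈ (stage G H hG hH m).1)
    (hn : (a', b') ∈ (stage G H hG hH n).1) :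
    (a = a' ↔ b = b') ∧ (G.Adj a a' ↔ H.Adj b b') := by
  have h1 := stage_mono G H hG hH (Nat.le_max_left m n) hm
  have h2 := stage_mono G H hG hH (Nat.le_max_right m n) hn
  exact (stage G H hG hH (max m n)).2 _ h1 _ h2

theorem mem_fst (hG : ExtensionProperty G) (hH : ExtensionProperty H) (n : ℕ) :
    ∃ c, (Denumerable.ofNat α n, c) ∈ (stage G H hG hH (n + 1)).1 := by
  simp only [stage]
  exact ⟨_, List.mem_cons_of_mem _ List.mem_cons_self⟩

theorem mem_snd (hG : ExtensionProperty G) (hH : ExtensionProperty H) (n : ℕ) :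
    ∃ c, (c, Denumerable.ofNat β n) ∈ (stage G H hG hH (n + 1)).1 := by
  simp only [stage]
  exact ⟨_, List.mem_cons_self⟩

theorem total (hG : ExtensionProperty G) (hH : ExtensionProperty H) (a : α) :
    ∃ b n, (a, b) ∈ (stage G H hG hH n).1 := by
  obtain ⟨c, hc⟩ := mem_fst G H hG hH (Encodable.encode a)
  rw [Denumerable.ofNat_encode] at hc
  exact ⟨c, _, hc⟩

theorem cototal (hG : ExtensionProperty G) (hH : ExtensionProperty H) (b : β) :
    ∃ a n, (a, b) ∈ (stage G H hG hH n).1 := by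
  obtain ⟨c, hc⟩ := mem_snd G H hG hH (Encodable.encode b)
  rw [Denumerable.ofNat_encode] at hc
  exact ⟨c, _, hc⟩

noncomputable def limitFun (hG : ExtensionProperty G) (hH : ExtensionProperty H) (a : α) : β := (total G H hG hH a).choose

theorem limitFun_mem (hG : ExtensionProperty G) (hH : ExtensionProperty H) (a : α) : ∃ n, (a, limitFun G H hG hH a) ∈ (stage G H hG hH n).1 :=
  (total G H hG hH a).choose_spec

theorem iso (hG : ExtensionProperty G) (hH : ExtensionProperty H) : Nonempty (G ≃g H) := by
  set f := limitFun G H hG hH with hf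
  have hinj : Function.Injective f := by
    intro a a' h
    obtain ⟨m, hm⟩ := limitFun_mem G H hG hH a
    obtain ⟨n, hn⟩ := limitFun_mem G H hG hH a'
    exact (compat G H hG hH hm hn).1.2 h
  have hsurj : Function.Surjective f := by
    intro b
    obtain ⟨a, n, hn⟩ := cototal G H hG hH b
    obtain ⟨m, hm⟩ := limitFun_mem G H hG hH a
    exact ⟨a, (compat G H hG hH hm hn).1.1 rfl⟩
  refine ⟨⟨Equiv.ofBijective f ⟨hinj, hsurj⟩, ?_⟩⟩
  intro a a'
  obtain ⟨m, hm⟩ := limitFun_mem G H hG hH a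
  obtain ⟨n, hn⟩ := limitFun_mem G H hG hH a'
  exact (compat G H hG hH hm hn).2.symm

end RadoAux

theorem ExtensionProperty.infinite {α : Type*} {G : SimpleGraph α}
    (hG : ExtensionProperty G) : Infinite α := by
  rw [← not_finite_iff_infinite]
  intro h
  have := Fintype.ofFinite α
  obtain ⟨v, -, hv, -, -⟩ := hG ∅ Finset.univ (by simp)
  exact hv (Finset.mem_univ v)

theorem iso_of_ext {α β : Type*} [Countable α] [Countable β]
    (G : SimpleGraph α) (H : SimpleGraph β)
    (hG : ExtensionProperty G) (hH : ExtensionProperty H) : Nonempty (G ≃g H) := by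
  have := hG.infinite
  have := hH.infinite
  obtain ⟨dα⟩ := nonempty_denumerable α
  obtain ⟨dβ⟩ := nonempty_denumerable β
  exact RadoAux.iso G H hG hH

/-- The Rado graph is indivisible: for any finite partition of the vertices of
the Rado graph (a countable graph with the extension property), some piece
induces a subgraph isomorphic to the whole graph. -/
theorem rado_indivisible {V : Type*} [Countable V] (G : SimpleGraph V)
    (hG : ExtensionProperty G) (r : ℕ) (p : V → Fin r) :
    ∃ i : Fin r, ∃ S : Set V, (∀ v ∈ S, p v = i) ∧
      Nonempty ((G.induce S) ≃g G) := by
  classical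
  by_cases hex : ∃ i : Fin r, ∀ A B : Finset V, (∀ a ∈ A, p a = i) → (∀ b ∈ B, p b = i) →
      Disjoint A B →
      ∃ v : V, p v = i ∧ v ∉ A ∧ v ∉ B ∧ (∀ a ∈ A, G.Adj v a) ∧ (∀ b ∈ B, ¬ G.Adj v b)
  · obtain ⟨i, hi⟩ := hex
    refine ⟨i, {v | p v = i}, fun v hv => hv, ?_⟩
    set S : Set V := {v | p v = i}
    have hext : ExtensionProperty (G.induce S) := by
      intro A B hAB
      let e : S ↪ V := ⟨Subtype.val, Subtype.val_injective⟩
      obtain ⟨v, hvi, hvA, hvB, hvadj, hvnadj⟩ := hi (A.map e) (B.map e)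
        (by rintro a ha; simp only [Finset.mem_map] at ha; obtain ⟨⟨a, hai⟩, -, rfl⟩ := ha;
            exact hai)
        (by rintro b hb; simp only [Finset.mem_map] at hb; obtain ⟨⟨b, hbi⟩, -, rfl⟩ := hb;
            exact hbi)
        (by rwa [Finset.disjoint_map])
      refine ⟨⟨v, hvi⟩, ?_, ?_, ?_, ?_⟩
      · intro h; exact hvA (Finset.mem_map.2 ⟨_, h, rfl⟩)
      · intro h; exact hvB (Finset.mem_map.2 ⟨_, h, rfl⟩)
      · rintro ⟨a, hai⟩ ha
        exact hvadj a (Finset.mem_map.2 ⟨_, ha, rfl⟩)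
      · rintro ⟨b, hbi⟩ hb
        exact hvnadj b (Finset.mem_map.2 ⟨_, hb, rfl⟩)
    exact iso_of_ext _ _ hext hG
  · exfalso
    push_neg at hex
    choose A B hA hB hd hw using hex
    set AA : Finset V := Finset.univ.biUnion A with hAA
    set BB : Finset V := Finset.univ.biUnion B with hBB
    have hdisj : Disjoint AA BB := by
      rw [Finset.disjoint_left]
      intro x hxA hxB
      simp only [hAA, hBB, Finset.mem_biUnion, Finset.mem_univ, true_and] at hxA hxB
      obtain ⟨i, hxi⟩ := hxA
      obtain ⟨j, hxj⟩ := hxB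
      have hij : i = j := (hA i x hxi).symm.trans (hB j x hxj)
      subst hij
      exact (Finset.disjoint_left.1 (hd i)) hxi hxj
    obtain ⟨v, hvA, hvB, hvadj, hvnadj⟩ := hG AA BB hdisj
    set i := p v with hi
    have h1 : v ∉ A i := fun h => hvA (Finset.mem_biUnion.2 ⟨i, Finset.mem_univ _, h⟩)
    have h2 : v ∉ B i := fun h => hvB (Finset.mem_biUnion.2 ⟨i, Finset.mem_univ _, h⟩)
    have h3 : ∀ a ∈ A i, G.Adj v a :=
      fun a ha => hvadj a (Finset.mem_biUnion.2 ⟨i, Finset.mem_univ _, ha⟩)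
    obtain ⟨b, hb, hadjb⟩ := hw i v rfl h1 h2 h3
    exact hvnadj b (Finset.mem_biUnion.2 ⟨i, Finset.mem_univ _, hb⟩) hadjb
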